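/- If every vertex of a graph G on N vertices has degree at least (1−o(1))pN, G is (p, c√(pN))-jumbled for a constant c, and p = ω(log N / N) with p = o(1), then the vertex connectivity of G is (1 ± o(1))pN. -/

import Mathlib

open Finset

set_option maxHeartbeats 1000000

/-- Ordered count of adjacent pairs from `U` to `W` (internal edges counted twice). -/
def eCount {V : Type*} [DecidableEq V] (G : SimpleGraph V) [DecidableRel G.Adj]
    (U W : Finset V) : ℕ :=
  ((U ×ˢ W).filter fun q => G.Adj q.1 q.2).card

/-- A graph is `(p, α)`-jumbled if `|e(U,W) - p|U||W|| ≤ α √(|U||W|)` for all vertex sets. -/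
def IsJumbled {V : Type*} [DecidableEq V] [Fintype V] (G : SimpleGraph V)
    [DecidableRel G.Adj] (p α : ℝ) : Prop :=
  ∀ U W : Finset V,
    |(eCount G U W : ℝ) - p * U.card * W.card| ≤ α * Real.sqrt (U.card * W.card)

/-- The vertex connectivity of `G`: the least size of a vertex set whose removal leaves a
non-connected graph. -/
noncomputable def vertexConnectivity {V : Type*} [Fintype V] (G : SimpleGraph V) : ℕ :=
  sInf {m : ℕ | ∃ S : Finset V, S.card = m ∧
    ¬(SimpleGraph.induce ((↑S : Set V)ᶜ) G).Connected}

lemma eCount_eq_sum {V : Type*} [DecidableEq V] (G : SimpleGraph V) [DecidableRel G.Adj]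
    (U W : Finset V) :
    eCount G U W = ∑ u ∈ U, (W.filter (fun w => G.Adj u w)).card := by
  unfold eCount
  rw [Finset.card_filter, Finset.sum_product]
  exact Finset.sum_congr rfl fun u _ => (Finset.card_filter _ _).symm

lemma eCount_union_le {V : Type*} [DecidableEq V] (G : SimpleGraph V) [DecidableRel G.Adj]
    (U A B : Finset V) :
    eCount G U (A ∪ B) ≤ eCount G U A + eCount G U B := by
  simp only [eCount_eq_sum, ← Finset.sum_add_distrib]
  refine Finset.sum_le_sum fun u _ => ?_
  rw [Finset.filter_union]
  exact Finset.card_union_le _ _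

lemma key_lemma (c d p : ℝ) (N : ℕ) (hc : 0 < c) (hd : 0 < d) (hd2 : d ≤ 1/2)
    (hp : 0 < p) (hpe : p ≤ d/8) (hL : 128*(c+1)^2/d^3 ≤ p*N)
    (G : SimpleGraph (Fin N)) [DecidableRel G.Adj]
    (hdeg : ∀ v, (1 - d/8) * p * N ≤ (G.degree v : ℝ))
    (hj : IsJumbled G p (c * Real.sqrt (p*N)))
    (S U W : Finset (Fin N))
    (hcover : ∀ v, v ∈ U ∨ v ∈ W ∨ v ∈ S)
    (hadj : ∀ u ∈ U, ∀ w ∈ W, ¬ G.Adj u w)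
    (hUne : U.Nonempty) (hWne : W.Nonempty) (hUW : U.card ≤ W.card) :
    (1 - d) * p * N ≤ (S.card : ℝ) := by
  by_contra hcon
  push_neg at hcon
  set a := (U.card : ℝ) with ha_def
  set b := (W.card : ℝ) with hb_def
  set s := (S.card : ℝ) with hs_def
  set sx := Real.sqrt (p*N) with hsx_def
  clear_value a b s sx
  have ha1 : (1:ℝ) ≤ a := by rw [ha_def]; exact_mod_cast Finset.card_pos.mpr hUne
  have hb1 : (1:ℝ) ≤ b := by rw [hb_def]; exact_mod_cast Finset.card_pos.mpr hWne
  have ha0 : (0:ℝ) ≤ a := by linarith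
  have hb0 : (0:ℝ) ≤ b := by linarith
  have hs0 : (0:ℝ) ≤ s := by rw [hs_def]; positivity
  have hab : a ≤ b := by rw [ha_def, hb_def]; exact_mod_cast hUW
  have hx : (0:ℝ) < p * N := lt_of_lt_of_le (div_pos (by nlinarith [sq_nonneg (c+1), hc]) (pow_pos hd 3)) hL
  have hN0 : (0:ℝ) < N := by
    by_contra h
    push_neg at h
    have hN : (N:ℝ) = 0 := le_antisymm h (Nat.cast_nonneg N)
    rw [hN, mul_zero] at hx
    exact lt_irrefl _ hx
  have hsx2 : sx^2 = p*N := by rw [hsx_def]; exact Real.sq_sqrt hx.le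
  have hsx0 : (0:ℝ) ≤ sx := by rw [hsx_def]; exact Real.sqrt_nonneg _
  have hd3 : (0:ℝ) < d^3 := pow_pos hd 3
  have hL' : 128*(c+1)^2 ≤ p*N*d^3 := (div_le_iff₀ hd3).mp hL
  have hspN : s < p * N := by
    have h0 : (0:ℝ) ≤ d*(p*N) := mul_nonneg hd.le hx.le
    linarith [hcon, h0]
  -- eCount U W = 0
  have E0 : eCount G U W = 0 := by
    unfold eCount
    rw [Finset.card_eq_zero, Finset.filter_eq_empty_iff]
    rintro ⟨u, w⟩ hq
    rw [Finset.mem_product] at hq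
    exact hadj u hq.1 w hq.2
  have hjUW := hj U W
  rw [E0, ← ha_def, ← hb_def] at hjUW
  rw [Nat.cast_zero, zero_sub, abs_neg, abs_of_nonneg (mul_nonneg (mul_nonneg hp.le ha0) hb0)] at hjUW
  -- hjUW : p * a * b ≤ c * sx * Real.sqrt (a * b)
  set t := Real.sqrt (a*b) with ht_def
  clear_value t
  have htt : t*t = a*b := by rw [ht_def]; exact Real.mul_self_sqrt (mul_nonneg ha0 hb0)
  have ht0 : (0:ℝ) < t := by rw [ht_def]; exact Real.sqrt_pos.mpr (mul_pos (by linarith) (by linarith))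
  have h1' : p * t ≤ c * sx := by
    refine le_of_mul_le_mul_right ?_ ht0
    calc p*t*t = p*(t*t) := by ring
      _ = p*a*b := by rw [htt]; ring
      _ ≤ c*sx*t := hjUW
  have h2 : p^2*(a*b) ≤ c^2*(p*N) := by
    have hsq := mul_self_le_mul_self (mul_nonneg hp.le ht0.le) h1'
    calc p^2*(a*b) = (p*t)*(p*t) := by rw [← htt]; ring
      _ ≤ (c*sx)*(c*sx) := hsq
      _ = c^2*sx^2 := by ring
      _ = c^2*(p*N) := by rw [hsx2]
  -- N ≤ a + b + s
  have hNab : (N:ℝ) ≤ a + b + s := by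
    have hsub : (univ : Finset (Fin N)) ⊆ U ∪ W ∪ S := by
      intro v _
      rcases hcover v with h | h | h
      · exact Finset.mem_union_left _ (Finset.mem_union_left _ h)
      · exact Finset.mem_union_left _ (Finset.mem_union_right _ h)
      · exact Finset.mem_union_right _ h
    have h1 := Finset.card_le_card hsub
    rw [Finset.card_univ, Fintype.card_fin] at h1
    have h2 := (Finset.card_union_le (U ∪ W) S).trans (Nat.add_le_add_right (Finset.card_union_le U W) _)
    have h3 := h1.trans h2
    rw [ha_def, hb_def, hs_def]
    exact_mod_cast h3
  have hb3 : (N:ℝ) ≤ 3*b := by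
    have hpN8 : p * N ≤ d/8 * N := mul_le_mul_of_nonneg_right hpe hN0.le
    have hd16 : d/8 * N ≤ 1/16 * N := mul_le_mul_of_nonneg_right (by linarith) hN0.le
    linarith [hspN, hNab, hab, mul_nonneg (mul_nonneg hd.le hp.le) hN0.le]
  have hpa : p * a ≤ 3*c^2 := by
    refine le_of_mul_le_mul_right ?_ hx
    calc p*a*(p*N) = p^2*a*(N:ℝ) := by ring
      _ ≤ p^2*a*(3*b) := mul_le_mul_of_nonneg_left hb3 (mul_nonneg (sq_nonneg p) ha0)
      _ = 3*(p^2*(a*b)) := by ring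
      _ ≤ 3*(c^2*(p*N)) := by linarith [h2]
      _ = 3*c^2*(p*N) := by ring
  -- sqrt(pN) is large
  have hK : (8*(c+1)/d)^2 ≤ p*N := by
    rw [div_pow, div_le_iff₀ (pow_pos hd 2)]
    have hkey : 0 ≤ (p*N*d^2)*(1/2 - d) :=
      mul_nonneg (mul_nonneg hx.le (sq_nonneg d)) (by linarith)
    linarith [hL', hkey, sq_nonneg (c+1)]
  have hsK : 8*(c+1)/d ≤ sx := by
    rw [hsx_def]
    exact (Real.le_sqrt' (div_pos (by linarith) hd)).mpr hK
  have hcsx : c * sx ≤ d/8 * (p*N) := by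
    rw [← hsx2]
    have hdsx : 8*(c+1) ≤ d * sx := by
      rw [div_le_iff₀ hd] at hsK; linarith [hsK]
    have h := mul_le_mul_of_nonneg_right hdsx hsx0
    have hsq : sx * sx = sx^2 := by ring
    linarith [h, hsx0]
  have h3c : 3*c^2 ≤ d/8 * (p*N) := by
    have hd14 : (0:ℝ) ≤ 1/4 - d^2 := by
      have h := mul_le_mul hd2 hd2 hd.le (by norm_num : (0:ℝ) ≤ 1/2)
      linarith [h]
    have hkey : 0 ≤ (p*N*d)*(1/4 - d^2) := mul_nonneg (mul_nonneg hx.le hd.le) hd14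
    linarith [hL', hkey, sq_nonneg c, hc.le, sq_nonneg (c+1)]
  -- neighbor containment
  have hnb : ∀ u ∈ U, G.neighborFinset u ⊆ U ∪ S := by
    intro u hu w hw
    rw [SimpleGraph.mem_neighborFinset] at hw
    rcases hcover w with h | h | h
    · exact Finset.mem_union_left _ h
    · exact absurd hw (hadj u hu w h)
    · exact Finset.mem_union_right _ h
  rcases le_or_gt a ((8*(c+1)/d)^2) with hsmall | hbig
  · -- small case
    obtain ⟨u, hu⟩ := hUne
    have hdegu : (G.degree u : ℝ) ≤ a + s := by
      have h1 : G.degree u ≤ (U ∪ S).card := Finset.card_le_card (hnb u hu)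
      have h2 : (U ∪ S).card ≤ U.card + S.card := Finset.card_union_le _ _
      rw [ha_def, hs_def]
      exact_mod_cast h1.trans h2
    have hK2 : a * d^2 ≤ 64*(c+1)^2 := by
      have h := mul_le_mul_of_nonneg_right hsmall (sq_nonneg d)
      calc a * d^2 ≤ (8*(c+1)/d)^2 * d^2 := h
        _ = 64*(c+1)^2 := by field_simp; ring
    have hdu := hdeg u
    have hA : 7*d/8*(p*N) ≤ a := by linarith [hdu, hdegu, hcon]
    have hA2 := mul_le_mul_of_nonneg_right hA (sq_nonneg d)
    have hpos : (0:ℝ) < (c+1)^2 := pow_pos (by linarith) 2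
    linarith [hK2, hL', hA2, hpos]
  · -- large case
    have hsumdeg : a * ((1-d/8)*p*N) ≤ (∑ u ∈ U, (G.degree u : ℝ)) := by
      have h := Finset.card_nsmul_le_sum U (fun u => (G.degree u : ℝ)) ((1-d/8)*p*N)
        (fun u _ => hdeg u)
      rw [nsmul_eq_mul] at h
      rw [ha_def]
      exact h
    have hsum_le : (∑ u ∈ U, G.degree u) ≤ eCount G U (U ∪ S) := by
      rw [eCount_eq_sum]
      refine Finset.sum_le_sum fun u hu => ?_
      refine Finset.card_le_card ?_
      intro w hw
      rw [Finset.mem_filter]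
      exact ⟨hnb u hu hw, (SimpleGraph.mem_neighborFinset G u w).mp hw⟩
    have hec := eCount_union_le G U U S
    have hjUU := hj U U
    have hjUS := hj U S
    rw [← ha_def] at hjUU
    rw [← ha_def, ← hs_def] at hjUS
    rw [abs_le] at hjUU hjUS
    have hsaa : Real.sqrt (a * a) = a := Real.sqrt_mul_self ha0
    have hUU : (eCount G U U : ℝ) ≤ p*a*a + c*sx*a := by
      have h := hjUU.2
      rw [hsaa] at h
      linarith
    have hUS : (eCount G U S : ℝ) ≤ p*a*s + c*sx*Real.sqrt (a*s) := by linarith [hjUS.2]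
    have main : a * ((1-d/8)*p*N) ≤ p*a*a + c*sx*a + (p*a*s + c*sx*Real.sqrt (a*s)) := by
      have hcast : (∑ u ∈ U, (G.degree u : ℝ)) ≤ (eCount G U U : ℝ) + (eCount G U S : ℝ) := by
        have h := hsum_le.trans hec
        exact_mod_cast h
      linarith [hsumdeg, hcast, hUU, hUS]
    -- term bounds
    have T1 : p*a*a ≤ d/8*(p*N)*a := by
      have h := mul_le_mul_of_nonneg_right (hpa.trans h3c) ha0
      linarith [h]
    have T2 : c*sx*a ≤ d/8*(p*N)*a := by
      have h := mul_le_mul_of_nonneg_right hcsx ha0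
      linarith [h]
    have T3 : p*a*s ≤ d/8*(p*N)*a := by
      have t3a : p*a*s ≤ p*a*(p*N) := mul_le_mul_of_nonneg_left hspN.le (mul_nonneg hp.le ha0)
      have t3b : p*(a*(p*N)) ≤ (d/8)*(a*(p*N)) :=
        mul_le_mul_of_nonneg_right hpe (mul_nonneg ha0 hx.le)
      linarith [t3a, t3b]
    have T4 : c*sx*Real.sqrt (a*s) ≤ d/8*(p*N)*a := by
      have hsa : Real.sqrt (a*s) ≤ Real.sqrt a * sx := by
        calc Real.sqrt (a*s) ≤ Real.sqrt (a*(p*N)) := Real.sqrt_le_sqrt (mul_le_mul_of_nonneg_left hspN.le ha0)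
          _ = Real.sqrt a * sx := by rw [Real.sqrt_mul ha0, hsx_def]
      have hsqa_ge : 8*(c+1)/d ≤ Real.sqrt a := (Real.le_sqrt' (div_pos (by linarith) hd)).mpr hbig.le
      have hsqa' : Real.sqrt a * (8*(c+1)) ≤ a * d := by
        have hge : 8*(c+1) ≤ d * Real.sqrt a := by
          rw [div_le_iff₀ hd] at hsqa_ge; linarith
        have h := mul_le_mul_of_nonneg_right hge (Real.sqrt_nonneg a)
        have hms : d * Real.sqrt a * Real.sqrt a = d * a := by
          rw [mul_assoc, Real.mul_self_sqrt ha0]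
        linarith [h, hms]
      have h8 : 8*c*Real.sqrt a ≤ d * a := by linarith [hsqa', Real.sqrt_nonneg a]
      calc c*sx*Real.sqrt (a*s) ≤ c*sx*(Real.sqrt a * sx) := by
            exact mul_le_mul_of_nonneg_left hsa (mul_nonneg hc.le hsx0)
        _ = c*(sx*sx)*Real.sqrt a := by ring
        _ = c*(p*N)*Real.sqrt a := by rw [← hsx2]; ring
        _ ≤ d/8*(p*N)*a := by linarith [mul_le_mul_of_nonneg_left h8 hx.le]
    have hapN : 0 < a*(p*N) := mul_pos (lt_of_lt_of_le one_pos ha1) hx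
    have hdap : d*(a*(p*N)) ≤ 1/2*(a*(p*N)) := mul_le_mul_of_nonneg_right hd2 hapN.le
    linarith [main, T1, T2, T3, T4, hapN, hdap]

lemma conn_upper (c d p : ℝ) (N : ℕ) (hc : 0 < c) (hd : 0 < d) (hd2 : d ≤ 1/2)
    (hp : 0 < p) (hpe : p ≤ d/8) (hL : 128*(c+1)^2/d^3 ≤ p*N) (hN2 : 2 ≤ N)
    (G : SimpleGraph (Fin N)) [DecidableRel G.Adj]
    (hj : IsJumbled G p (c * Real.sqrt (p*N))) :
    (vertexConnectivity G : ℝ) ≤ (1 + d) * p * N := by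
  have hd3 : (0:ℝ) < d^3 := pow_pos hd 3
  have hx : (0:ℝ) < p * N := lt_of_lt_of_le (div_pos (by nlinarith [sq_nonneg (c+1), hc]) hd3) hL
  have hNR : (0:ℝ) < N := by
    by_contra h
    push_neg at h
    have hN : (N:ℝ) = 0 := le_antisymm h (Nat.cast_nonneg N)
    rw [hN, mul_zero] at hx
    exact lt_irrefl _ hx
  set sx := Real.sqrt (p*N) with hsx_def
  have hsx2 : sx^2 = p*N := Real.sq_sqrt hx.le
  have hsx0 : (0:ℝ) ≤ sx := Real.sqrt_nonneg _
  have hL' : 128*(c+1)^2 ≤ p*N*d^3 := (div_le_iff₀ hd3).mp hL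
  have hK : (8*(c+1)/d)^2 ≤ p*N := by
    rw [div_pow, div_le_iff₀ (pow_pos hd 2)]
    have hkey : 0 ≤ (p*N*d^2)*(1/2 - d) :=
      mul_nonneg (mul_nonneg hx.le (sq_nonneg d)) (by linarith)
    linarith [hL', hkey, sq_nonneg (c+1)]
  have hsK : 8*(c+1)/d ≤ sx := (Real.le_sqrt' (div_pos (by linarith) hd)).mpr hK
  have hcsx : c * sx ≤ d/8 * (p*N) := by
    rw [← hsx2]
    have hdsx : 8*(c+1) ≤ d * sx := by
      rw [div_le_iff₀ hd] at hsK; linarith [hsK]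
    have h := mul_le_mul_of_nonneg_right hdsx hsx0
    linarith [h, hsx0]
  -- find vertex of minimal degree
  have hNpos : 0 < N := by omega
  obtain ⟨v, -, hv⟩ := Finset.exists_min_image (univ : Finset (Fin N)) (fun w => G.degree w)
    ⟨(⟨0, hNpos⟩ : Fin N), Finset.mem_univ _⟩
  have hsum_eq : ∑ w, G.degree w = eCount G univ univ := by
    rw [eCount_eq_sum]
    refine Finset.sum_congr rfl fun u _ => ?_
    rw [show G.degree u = (G.neighborFinset u).card from rfl, SimpleGraph.neighborFinset_eq_filter]
  have hNd : N * G.degree v ≤ ∑ w, G.degree w := by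
    calc N * G.degree v = ∑ _w : Fin N, G.degree v := by
          rw [Finset.sum_const, Finset.card_univ, Fintype.card_fin, smul_eq_mul]
      _ ≤ ∑ w, G.degree w := Finset.sum_le_sum fun w _ => hv w (Finset.mem_univ w)
  have hjuu := hj univ univ
  rw [Finset.card_univ, Fintype.card_fin, abs_le] at hjuu
  have hsNN : Real.sqrt ((N:ℝ) * N) = N := Real.sqrt_mul_self (Nat.cast_nonneg N)
  have hec_le : (eCount G univ univ : ℝ) ≤ p*N*N + c*sx*N := by
    have h := hjuu.2
    rw [hsNN] at h
    linarith
  have hdv : (G.degree v : ℝ) ≤ p*N + c*sx := by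
    refine le_of_mul_le_mul_left ?_ hNR
    have hcast : (N:ℝ) * G.degree v ≤ (eCount G univ univ : ℝ) := by
      rw [← hsum_eq]
      exact_mod_cast hNd
    calc (N:ℝ) * G.degree v ≤ (eCount G univ univ : ℝ) := hcast
      _ ≤ p*N*N + c*sx*N := hec_le
      _ = (N:ℝ) * (p*N + c*sx) := by ring
  have hdv2 : (G.degree v : ℝ) ≤ (1 + d) * p * N := by
    have h0 : 0 ≤ d*(p*N) := mul_nonneg hd.le hx.le
    linarith [hdv, hcsx]
  -- the neighborhood of v is a separator
  have hκ : vertexConnectivity G ≤ G.degree v := by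
    apply Nat.sInf_le
    refine ⟨G.neighborFinset v, rfl, ?_⟩
    intro hcon
    have hvmem : v ∈ (↑(G.neighborFinset v) : Set (Fin N))ᶜ := by
      simp only [Set.mem_compl_iff, Finset.mem_coe, SimpleGraph.mem_neighborFinset]
      exact G.irrefl
    have hdegN : G.degree v + 1 < N := by
      have hc1 : (G.degree v : ℝ) + 1 < N := by
        have hpN8 : p * N ≤ d/8 * N := mul_le_mul_of_nonneg_right hpe hNR.le
        have hd16 : d/8 * N ≤ 1/16 * N := mul_le_mul_of_nonneg_right (by linarith) hNR.le
        have hN2R : (2:ℝ) ≤ N := by exact_mod_cast hN2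
        have hdpN : d*(p*N) ≤ 1/2*(p*N) := mul_le_mul_of_nonneg_right hd2 hx.le
        linarith [hdv, hcsx, hpN8, hd16, hN2R, hdpN]
      exact_mod_cast hc1
    obtain ⟨u, hu⟩ : ∃ u, u ∉ insert v (G.neighborFinset v) := by
      by_contra hno
      push_neg at hno
      have hsub : (univ : Finset (Fin N)) ⊆ insert v (G.neighborFinset v) := fun w _ => hno w
      have hcard := Finset.card_le_card hsub
      rw [Finset.card_univ, Fintype.card_fin] at hcard
      have hil := Finset.card_insert_le v (G.neighborFinset v)
      have hdeq : G.degree v = (G.neighborFinset v).card := rfl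
      omega
    have humem : u ∈ (↑(G.neighborFinset v) : Set (Fin N))ᶜ := by
      simp only [Set.mem_compl_iff, Finset.mem_coe]
      exact fun h => hu (Finset.mem_insert_of_mem h)
    have hne : u ≠ v := fun h => hu (by rw [h]; exact Finset.mem_insert_self v _)
    have hreach := hcon.preconnected ⟨v, hvmem⟩ ⟨u, humem⟩
    have hxyne : (⟨v, hvmem⟩ : ((↑(G.neighborFinset v) : Set (Fin N))ᶜ : Set (Fin N))) ≠ ⟨u, humem⟩ := by
      intro h
      exact hne (congrArg Subtype.val h).symm
    rcases hreach with ⟨w⟩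
    have hado := w.adj_snd (SimpleGraph.Walk.not_nil_of_ne hxyne)
    have hGadj : G.Adj v ((w.getVert 1) : Fin N) := hado
    exact (w.getVert 1).2 (Finset.mem_coe.mpr ((SimpleGraph.mem_neighborFinset G v _).mpr hGadj))
  calc (vertexConnectivity G : ℝ) ≤ (G.degree v : ℝ) := by exact_mod_cast hκ
    _ ≤ (1 + d) * p * N := hdv2


/-- Graphs with minimum degree `(1-o(1))pN` that are `(p, c√(pN))`-jumbled, with
`ω(log N / N) = p = o(1)`, have vertex connectivity `(1 ± o(1))pN`. -/
theorem connectivity_of_jumbled (c δ : ℝ) (hc : 0 < c) (hδ : 0 < δ) :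
    ∃ ε : ℝ, 0 < ε ∧ ∃ C : ℝ, ∃ N₀ : ℕ, ∀ N, N₀ ≤ N → ∀ p : ℝ,
      C * Real.log N / N ≤ p → p ≤ ε →
      ∀ (G : SimpleGraph (Fin N)) [DecidableRel G.Adj],
        (∀ v, (1 - ε) * p * N ≤ (G.degree v : ℝ)) →
        IsJumbled G p (c * Real.sqrt (p * N)) →
        (1 - δ) * p * N ≤ (vertexConnectivity G : ℝ) ∧
          (vertexConnectivity G : ℝ) ≤ (1 + δ) * p * N := by
  classical
  set d := min δ (1/2) with hd_def
  have hd : 0 < d := lt_min hδ (by norm_num)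
  have hd2 : d ≤ 1/2 := min_le_right _ _
  have hdδ : d ≤ δ := min_le_left _ _
  set L := 128*(c+1)^2/d^3 with hL_def
  have hLpos : 0 < L := div_pos (by nlinarith [sq_nonneg (c+1), hc]) (pow_pos hd 3)
  refine ⟨d/8, by positivity, 1, max 2 (Nat.ceil (Real.exp L) + 1), ?_⟩
  intro N hN p hCp hpe G _ hdeg hj
  have hN2 : 2 ≤ N := le_trans (le_max_left _ _) hN
  have hNceil : Nat.ceil (Real.exp L) + 1 ≤ N := le_trans (le_max_right _ _) hN
  have hNR : Real.exp L ≤ N := by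
    calc Real.exp L ≤ (Nat.ceil (Real.exp L) : ℝ) := Nat.le_ceil _
      _ ≤ N := by exact_mod_cast Nat.le_of_succ_le hNceil
  have hNpos : (0:ℝ) < N := lt_of_lt_of_le (Real.exp_pos L) hNR
  have hlogN : L ≤ Real.log N := by
    rw [← Real.log_exp L]
    exact Real.log_le_log (Real.exp_pos L) hNR
  have hlogpos : 0 < Real.log N := lt_of_lt_of_le hLpos hlogN
  have hp : 0 < p := by
    refine lt_of_lt_of_le ?_ hCp
    rw [one_mul]
    exact div_pos hlogpos hNpos
  have hL : L ≤ p*N := by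
    rw [one_mul, div_le_iff₀ hNpos] at hCp
    linarith [hlogN, hCp]
  have hx : (0:ℝ) < p*N := lt_of_lt_of_le hLpos hL
  constructor
  · -- lower bound
    have hset_ne : {m : ℕ | ∃ S : Finset (Fin N), S.card = m ∧
        ¬(SimpleGraph.induce ((↑S : Set (Fin N))ᶜ) G).Connected}.Nonempty := by
      refine ⟨(univ : Finset (Fin N)).card, univ, rfl, ?_⟩
      intro hcon
      rcases hcon.nonempty with ⟨⟨x, hx'⟩⟩
      simp at hx'
    obtain ⟨S, hScard, hSnc⟩ := Nat.sInf_mem hset_ne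
    have hvc : (vertexConnectivity G : ℝ) = (S.card : ℝ) := by
      rw [vertexConnectivity, ← hScard]
    rw [hvc]
    by_cases hne : ∃ x : Fin N, x ∉ S
    · -- proper separator: extract two sides
      rw [SimpleGraph.connected_iff] at hSnc
      push_neg at hSnc
      have hnonempty : Nonempty (((↑S : Set (Fin N))ᶜ : Set (Fin N))) := by
        obtain ⟨x, hxS⟩ := hne
        exact ⟨⟨x, by simpa using hxS⟩⟩
      have hnp : ¬ (SimpleGraph.induce ((↑S : Set (Fin N))ᶜ) G).Preconnected := by
        intro h
        exact (hSnc h).elim hnonempty.some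
      rw [SimpleGraph.Preconnected] at hnp
      push_neg at hnp
      obtain ⟨x, y, hxy⟩ := hnp
      set H := SimpleGraph.induce ((↑S : Set (Fin N))ᶜ) G with hH_def
      set P : Fin N → Prop := fun v => ∃ h : v ∈ ((↑S : Set (Fin N))ᶜ), H.Reachable x ⟨v, h⟩ with hP_def
      set U := univ.filter P with hU_def
      set W := univ.filter (fun v => v ∈ ((↑S : Set (Fin N))ᶜ) ∧ ¬ P v) with hW_def
      have hcover : ∀ v : Fin N, v ∈ U ∨ v ∈ W ∨ v ∈ S := by
        intro v
        by_cases hvS : v ∈ S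
        · exact Or.inr (Or.inr hvS)
        · have hvΩ : v ∈ ((↑S : Set (Fin N))ᶜ) := by simpa using hvS
          by_cases hPv : P v
          · exact Or.inl (Finset.mem_filter.mpr ⟨Finset.mem_univ _, hPv⟩)
          · exact Or.inr (Or.inl (Finset.mem_filter.mpr ⟨Finset.mem_univ _, hvΩ, hPv⟩))
      have hadj : ∀ u ∈ U, ∀ w ∈ W, ¬ G.Adj u w := by
        intro u hu w hw hA
        have hu' : P u := (Finset.mem_filter.mp hu).2
        obtain ⟨huΩ, hr⟩ := hu'
        have hw' := (Finset.mem_filter.mp hw).2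
        obtain ⟨hwΩ, hnP⟩ := hw'
        refine hnP ⟨hwΩ, ?_⟩
        have hHadj : H.Adj ⟨u, huΩ⟩ ⟨w, hwΩ⟩ := hA
        exact hr.trans hHadj.reachable
      have hUne : U.Nonempty := by
        refine ⟨x.val, Finset.mem_filter.mpr ⟨Finset.mem_univ _, x.2, ?_⟩⟩
        rw [Subtype.coe_eta]
      have hWne : W.Nonempty := by
        refine ⟨y.val, Finset.mem_filter.mpr ⟨Finset.mem_univ _, y.2, ?_⟩⟩
        rintro ⟨h, hr⟩
        rw [Subtype.coe_eta] at hr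
        exact hxy hr
      have hgoal : (1 - d) * p * N ≤ (S.card : ℝ) := by
        rcases le_total U.card W.card with hle | hle
        · exact key_lemma c d p N hc hd hd2 hp hpe hL G hdeg hj S U W hcover hadj hUne hWne hle
        · refine key_lemma c d p N hc hd hd2 hp hpe hL G hdeg hj S W U ?_ ?_ hWne hUne hle
          · intro v
            rcases hcover v with h | h | h
            · exact Or.inr (Or.inl h)
            · exact Or.inl h
            · exact Or.inr (Or.inr h)
          · exact fun w hw u hu hA => hadj u hu w hw hA.symm
      have hmul : (1 - δ) * (p*N) ≤ (1 - d) * (p*N) :=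
        mul_le_mul_of_nonneg_right (by linarith) hx.le
      calc (1 - δ) * p * N = (1 - δ) * (p*N) := by ring
        _ ≤ (1 - d) * (p*N) := hmul
        _ = (1 - d) * p * N := by ring
        _ ≤ (S.card : ℝ) := hgoal
    · -- S = univ
      push_neg at hne
      have hSuniv : S = univ := Finset.eq_univ_iff_forall.mpr hne
      have hScardN : (S.card : ℝ) = N := by
        rw [hSuniv, Finset.card_univ, Fintype.card_fin]
      rw [hScardN]
      have h1 : (1 - δ) * (p*N) ≤ 1 * (p*N) := mul_le_mul_of_nonneg_right (by linarith) hx.le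
      have hpN8 : p * N ≤ d/8 * N := mul_le_mul_of_nonneg_right hpe hNpos.le
      have hd16 : d/8 * N ≤ 1/16 * N := mul_le_mul_of_nonneg_right (by linarith) hNpos.le
      calc (1 - δ) * p * N = (1 - δ) * (p*N) := by ring
        _ ≤ 1 * (p*N) := h1
        _ = p * N := by ring
        _ ≤ (N:ℝ) := by linarith
  · -- upper bound
    have hup := conn_upper c d p N hc hd hd2 hp hpe hL hN2 G hj
    have hmul : (1 + d) * (p*N) ≤ (1 + δ) * (p*N) :=
      mul_le_mul_of_nonneg_right (by linarith) hx.le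
    calc (vertexConnectivity G : ℝ) ≤ (1 + d) * p * N := hup
      _ = (1 + d) * (p*N) := by ring
      _ ≤ (1 + δ) * (p*N) := hmul
      _ = (1 + δ) * p * N := by ring
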